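/- Let q be an odd prime with q ≡ 1 (mod 4). Then every element g of SL₂(ZMod q) is conjugate to its inverse g⁻¹ in SL₂(ZMod q). -/

import Mathlib

lemma aux_conj (q : ℕ) [Fact (Nat.Prime q)]
    (g : Matrix.SpecialLinearGroup (Fin 2) (ZMod q)) (x y z : ZMod q)
    (h1 : (g.1 0 0 - g.1 1 1) * x + g.1 1 0 * y + g.1 0 1 * z = 0)
    (h2 : x * x + y * z = -1) : IsConj g g⁻¹ := by
  have hdet : (!![x, y; z, -x] : Matrix (Fin 2) (Fin 2) (ZMod q)).det = 1 := by
    rw [Matrix.det_fin_two_of]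
    linear_combination -h2
  refine isConj_iff.2 ⟨⟨!![x, y; z, -x], hdet⟩, ?_⟩
  apply mul_inv_eq_iff_eq_mul.2
  apply Subtype.ext
  show (!![x, y; z, -x] : Matrix (Fin 2) (Fin 2) (ZMod q)) * g.1
      = (g⁻¹).1 * !![x, y; z, -x]
  rw [Matrix.SpecialLinearGroup.coe_inv, Matrix.adjugate_fin_two]
  ext i j
  fin_cases i <;> fin_cases j <;>
    simp [Matrix.mul_apply, Fin.sum_univ_succ] <;>
    first | ring1 | linear_combination h1 | linear_combination -h1

theorem all_real_of_one_mod_four (q : ℕ) [Fact (Nat.Prime q)] (hq : Odd q)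
    (hq4 : q % 4 = 1) (g : Matrix.SpecialLinearGroup (Fin 2) (ZMod q)) :
    IsConj g g⁻¹ := by
  obtain ⟨i, hi⟩ : IsSquare (-1 : ZMod q) :=
    (ZMod.exists_sq_eq_neg_one_iff (p := q)).2 (by omega)
  by_cases hc : g.1 1 0 = 0
  · by_cases hb : g.1 0 1 = 0
    · exact aux_conj q g 0 1 (-1) (by rw [hb, hc]; ring) (by ring)
    · refine aux_conj q g i 0 (-((g.1 0 0 - g.1 1 1) * i) / g.1 0 1) ?_ ?_
      · rw [hc]; field_simp; ring
      · field_simp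
        linear_combination -(g.1 0 1) * hi
  · refine aux_conj q g i (-((g.1 0 0 - g.1 1 1) * i) / g.1 1 0) 0 ?_ ?_
    · field_simp
      ring
    · field_simp
      linear_combination -(g.1 1 0) * hi
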